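/- Let A, B, C be groupoids, a : C → A and b : C → B functors bijective on objects, and D a groupoid. Given a square consisting of f : A → D, g : B → D and a natural isomorphism α : g ∘ b ≅ f ∘ a, there exists a functor h : A *_C B → D with h ∘ i_A = f (strictly, on a suitable presentation) and a natural isomorphism β : g ≅ h ∘ i_B such that the whiskered compatibility β ∘ b = (identity on h∘i_A∘a) ∘ α⁻¹ holds; i.e., every pseudo-commutative cocone over the span can be rectified to one where the A-leg commutes strictly. -/

import Mathlib

/-!
STATEMENT 8: Let `A, B, C` be groupoids, `a : C ⥤ A` and `b : C ⥤ B` bijective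
on objects, and `P = A *_C B` their 1-categorical pushout (encoded by its strict
universal property), with structure maps `iA, iB`.  Every pseudo-commutative
cocone `(f : A ⥤ D, g : B ⥤ D, α : g ∘ b ≅ f ∘ a)` can be rectified: there is a
functor `h : P ⥤ D` with `iA ⋙ h = f` *strictly*, and a natural isomorphism
`β : g ≅ iB ⋙ h` such that the whiskering `β ∘ b` followed by the canonical
identification `b ⋙ iB ⋙ h = a ⋙ iA ⋙ h = a ⋙ f` equals `α`.
-/

open CategoryTheory

universe u v w w'

theorem pushout_cocone_rectification
    {A B C P : Type u} [Groupoid.{v} A] [Groupoid.{v} B] [Groupoid.{v} C]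
    [Groupoid.{v} P]
    (a : C ⥤ A) (b : C ⥤ B) (iA : A ⥤ P) (iB : B ⥤ P)
    (ha : Function.Bijective a.obj) (hb : Function.Bijective b.obj)
    (hcomm : a ⋙ iA = b ⋙ iB)
    (hpush : ∀ {D : Type w} [Groupoid.{w'} D] (f : A ⥤ D) (g : B ⥤ D),
      a ⋙ f = b ⋙ g → ∃! h : P ⥤ D, iA ⋙ h = f ∧ iB ⋙ h = g)
    {D : Type w} [Groupoid.{w'} D] (f : A ⥤ D) (g : B ⥤ D)
    (α : b ⋙ g ≅ a ⋙ f) :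
    ∃ h : P ⥤ D, iA ⋙ h = f ∧
      ∃ (β : g ≅ iB ⋙ h) (e : b ⋙ (iB ⋙ h) = a ⋙ f),
        Functor.isoWhiskerLeft b β ≪≫ eqToIso e = α := by
  classical
  -- inverse of b on objects
  let ebo : C ≃ B := Equiv.ofBijective b.obj hb
  have hbinv : ∀ x : B, b.obj (ebo.symm x) = x := fun x => ebo.apply_symm_apply x
  have hbinv' : ∀ c : C, ebo.symm (b.obj c) = c := fun c => ebo.symm_apply_apply c
  -- the component of the rectifying isomorphism
  let βa : ∀ x : B, g.obj x ⟶ f.obj (a.obj (ebo.symm x)) :=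
    fun x => eqToHom (congrArg g.obj (hbinv x).symm) ≫ α.hom.app (ebo.symm x)
  -- the rectified functor g'
  let g' : B ⥤ D :=
    { obj := fun x => f.obj (a.obj (ebo.symm x))
      map := fun {x y} φ => Groupoid.inv (βa x) ≫ g.map φ ≫ βa y
      map_id := by
        intro x
        simp [Groupoid.inv_eq_inv]
      map_comp := by
        intro x y z φ ψ
        simp [Groupoid.inv_eq_inv] }
  -- β as natural iso g ≅ g'
  have βnat : ∀ {x y : B} (φ : x ⟶ y), g.map φ ≫ βa y = βa x ≫ g'.map φ := by
    intro x y φ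
    simp [g', Groupoid.inv_eq_inv]
  let βiso : g ≅ g' :=
    NatIso.ofComponents
      (fun x => ⟨βa x, Groupoid.inv (βa x), by simp [Groupoid.inv_eq_inv],
        by simp [Groupoid.inv_eq_inv]⟩)
      (fun φ => βnat φ)
  -- the square commutes strictly with g'
  have hsq : a ⋙ f = b ⋙ g' := by
    refine CategoryTheory.Functor.ext (fun x => by simp [g', hbinv' x]) ?_
    · intro x y φ
      have h1 : ebo.symm (b.obj x) = x := hbinv' x
      have h2 : ebo.symm (b.obj y) = y := hbinv' y
      have hn := α.hom.naturality φ
      simp only [Functor.comp_map] at hn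
      have conj : ∀ (c c' : C) (h : c = c'),
          α.hom.app c = eqToHom (by rw [h]) ≫ α.hom.app c' ≫ eqToHom (by rw [h]) := by
        rintro c c' rfl; simp
      simp only [g', Functor.comp_map, βa, Groupoid.inv_eq_inv]
      rw [conj _ _ h1, conj _ _ h2]
      simp only [IsIso.inv_comp, inv_eqToHom, Category.assoc, eqToHom_trans,
        eqToHom_trans_assoc, eqToHom_refl, Category.comp_id, Category.id_comp]
      rw [IsIso.eq_inv_comp]
      exact hn.symm
  obtain ⟨h, ⟨hfa, hfb⟩, -⟩ := hpush f g' hsq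
  refine ⟨h, hfa, βiso ≪≫ eqToIso hfb.symm, ?_, ?_⟩
  · rw [hfb]; exact hsq.symm
  · ext c
    have h1 : ebo.symm (b.obj c) = c := hbinv' c
    simp only [Iso.trans_hom, Functor.isoWhiskerLeft_hom, eqToIso.hom, NatTrans.comp_app,
      Functor.whiskerLeft_app, βiso, NatIso.ofComponents_hom_app, eqToHom_app, βa]
    have conj : ∀ (c' : C) (h : c' = c),
        α.hom.app c' = eqToHom (by rw [h]) ≫ α.hom.app c ≫ eqToHom (by rw [h]) := by
      rintro c' rfl; simp
    rw [conj _ h1]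
    simp
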